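/- There exists a real number s with 1 < s < 1.01 satisfying the Efimov equation s = (8/√3) · sinh(π·s/6) / cosh(π·s/2). -/
import Mathlib

open Real

private lemma exp_lb {q c : ℝ} (h0 : 0 ≤ q) (h1 : q ≤ 1)
    (h : c + q ^ 9 * (10 / (362880 * 9)) ≤
      1 + q + q^2/2 + q^3/6 + q^4/24 + q^5/120 + q^6/720 + q^7/5040 + q^8/40320) :
    c ≤ Real.exp q := by
  have hb := Real.exp_bound (n := 9) (by rw [abs_of_nonneg h0]; exact h1) (by norm_num)
  rw [abs_of_nonneg h0] at hb
  have hsum : ∑ m ∈ Finset.range 9, q ^ m / m.factorial =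
      1 + q + q^2/2 + q^3/6 + q^4/24 + q^5/120 + q^6/720 + q^7/5040 + q^8/40320 := by
    norm_num [Finset.sum_range_succ, Nat.factorial]
  rw [hsum] at hb
  norm_num [Nat.factorial] at hb h
  have h2 := (abs_sub_le_iff.1 hb).2
  linarith

private lemma exp_ub {q c : ℝ} (h0 : 0 ≤ q) (h1 : q ≤ 1)
    (h : 1 + q + q^2/2 + q^3/6 + q^4/24 + q^5/120 + q^6/720 + q^7/5040 + q^8/40320
      + q ^ 9 * (10 / (362880 * 9)) ≤ c) :
    Real.exp q ≤ c := by
  have hb := Real.exp_bound (n := 9) (by rw [abs_of_nonneg h0]; exact h1) (by norm_num)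
  rw [abs_of_nonneg h0] at hb
  have hsum : ∑ m ∈ Finset.range 9, q ^ m / m.factorial =
      1 + q + q^2/2 + q^3/6 + q^4/24 + q^5/120 + q^6/720 + q^7/5040 + q^8/40320 := by
    norm_num [Finset.sum_range_succ, Nat.factorial]
  rw [hsum] at hb
  norm_num [Nat.factorial] at hb h
  have h2 := (abs_sub_le_iff.1 hb).1
  linarith

private lemma expE_bounds {s a b : ℝ} (hs : 0 < s) (hs1 : s ≤ 1.01)
    (ha : a ≤ Real.exp (3.1415926 * s / 6)) (hb : Real.exp (3.1415927 * s / 6) ≤ b) :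
    a < Real.exp (π * s / 6) ∧ Real.exp (π * s / 6) < b := by
  have hpl : (3.1415926 : ℝ) < π := by linarith [Real.pi_gt_d20]
  have hpu : π < 3.1415927 := by linarith [Real.pi_lt_d20]
  have h1 : Real.exp (3.1415926 * s / 6) < Real.exp (π * s / 6) := by
    apply Real.exp_lt_exp.2
    have := mul_lt_mul_of_pos_right hpl hs
    linarith
  have h2 : Real.exp (π * s / 6) < Real.exp (3.1415927 * s / 6) := by
    apply Real.exp_lt_exp.2
    have := mul_lt_mul_of_pos_right hpu hs
    linarith
  exact ⟨lt_of_le_of_lt ha h1, lt_of_lt_of_le h2 hb⟩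

/-- There is a root `s₀` of the Efimov transcendental equation
`s = (8/√3) sinh(πs/6)/cosh(πs/2)` in the interval `(1, 1.01)`. -/
theorem efimov_constant_exists :
    ∃ s : ℝ, 1 < s ∧ s < 1.01 ∧
      s = (8 / Real.sqrt 3) * Real.sinh (π * s / 6) / Real.cosh (π * s / 2) := by
  -- sqrt 3 bounds
  have hs3l : (1.7320508 : ℝ) < Real.sqrt 3 := by
    have : (1.7320508 : ℝ) = Real.sqrt (1.7320508 ^ 2) := (Real.sqrt_sq (by norm_num)).symm
    rw [this]
    exact Real.sqrt_lt_sqrt (by positivity) (by norm_num)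
  have hs3u : Real.sqrt 3 < 1.7320509 := by
    have : (1.7320509 : ℝ) = Real.sqrt (1.7320509 ^ 2) := (Real.sqrt_sq (by norm_num)).symm
    rw [this]
    exact Real.sqrt_lt_sqrt (by norm_num) (by norm_num)
  have hs3pos : (0 : ℝ) < Real.sqrt 3 := by linarith
  -- the function
  set f : ℝ → ℝ := fun s => (8 / Real.sqrt 3) * Real.sinh (π * s / 6) / Real.cosh (π * s / 2) - s
    with hf
  have hcont : ContinuousOn f (Set.Icc 1 1.01) := by
    apply ContinuousOn.sub _ continuousOn_id
    apply ContinuousOn.div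
    · fun_prop
    · fun_prop
    · exact fun s _ => (Real.cosh_pos (π * s / 2)).ne'
  -- generic rewriting of sinh/cosh at π s in terms of E = exp(π s/6)
  have key : ∀ s : ℝ, Real.sinh (π * s / 6) =
      (Real.exp (π * s / 6) - (Real.exp (π * s / 6))⁻¹) / 2 ∧
      Real.cosh (π * s / 2) =
      ((Real.exp (π * s / 6)) ^ 3 + ((Real.exp (π * s / 6))⁻¹) ^ 3) / 2 := by
    intro s
    have h3 : π * s / 2 = (3 : ℕ) * (π * s / 6) := by push_cast; ring
    constructor
    · rw [Real.sinh_eq, Real.exp_neg]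
    · rw [Real.cosh_eq, h3, Real.exp_nat_mul, Real.exp_neg, ← Real.exp_nat_mul, ← h3,
        h3, Real.exp_nat_mul, ← inv_pow]
  -- bounds at s = 1
  have hE1 : (1.6880917 : ℝ) < Real.exp (π * 1 / 6) ∧ Real.exp (π * 1 / 6) < 1.6880919 := by
    apply expE_bounds (by norm_num) (by norm_num)
    · apply exp_lb (by norm_num) (by norm_num); norm_num
    · apply exp_ub (by norm_num) (by norm_num); norm_num
  have hE1pos : (0:ℝ) < Real.exp (π * 1 / 6) := Real.exp_pos _
  have hE1inv : (0.592384 : ℝ) < (Real.exp (π * 1 / 6))⁻¹ ∧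
      (Real.exp (π * 1 / 6))⁻¹ < 0.592385 := by
    have hmul : (Real.exp (π * 1 / 6))⁻¹ * Real.exp (π * 1 / 6) = 1 :=
      inv_mul_cancel₀ hE1pos.ne'
    have hipos : (0:ℝ) < (Real.exp (π * 1 / 6))⁻¹ := by positivity
    constructor <;> nlinarith [hE1.1, hE1.2]
  have hsinh1 : (0.547853 : ℝ) < Real.sinh (π * 1 / 6) := by
    rw [(key 1).1]; linarith [hE1.1, hE1inv.2]
  have hcosh1 : Real.cosh (π * 1 / 2) < 2.5091791 := by
    rw [(key 1).2]
    have h1 : (Real.exp (π * 1 / 6)) ^ 3 < 1.6880919 ^ 3 :=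
      pow_lt_pow_left₀ hE1.2 hE1pos.le (by norm_num)
    have h2 : ((Real.exp (π * 1 / 6))⁻¹) ^ 3 < 0.592385 ^ 3 :=
      pow_lt_pow_left₀ hE1inv.2 (by positivity) (by norm_num)
    norm_num at h1 h2 ⊢
    linarith
  -- bounds at s = 1.01
  have hE2 : (1.6969537 : ℝ) < Real.exp (π * 1.01 / 6) ∧
      Real.exp (π * 1.01 / 6) < 1.6969539 := by
    apply expE_bounds (by norm_num) (by norm_num)
    · apply exp_lb (by norm_num) (by norm_num); norm_num
    · apply exp_ub (by norm_num) (by norm_num); norm_num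
  have hE2pos : (0:ℝ) < Real.exp (π * 1.01 / 6) := Real.exp_pos _
  have hE2inv : (0.589291 : ℝ) < (Real.exp (π * 1.01 / 6))⁻¹ ∧
      (Real.exp (π * 1.01 / 6))⁻¹ < 0.589292 := by
    have hmul : (Real.exp (π * 1.01 / 6))⁻¹ * Real.exp (π * 1.01 / 6) = 1 :=
      inv_mul_cancel₀ hE2pos.ne'
    have hipos : (0:ℝ) < (Real.exp (π * 1.01 / 6))⁻¹ := by positivity
    constructor <;> nlinarith [hE2.1, hE2.2]
  have hsinh2 : Real.sinh (π * 1.01 / 6) < 0.553833 := by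
    rw [(key 1.01).1]; linarith [hE2.2, hE2inv.1]
  have hcosh2 : (2.545637 : ℝ) < Real.cosh (π * 1.01 / 2) := by
    rw [(key 1.01).2]
    have h1 : (1.6969537 : ℝ) ^ 3 < (Real.exp (π * 1.01 / 6)) ^ 3 :=
      pow_lt_pow_left₀ hE2.1 (by norm_num) (by norm_num)
    have h2 : (0.589291 : ℝ) ^ 3 < ((Real.exp (π * 1.01 / 6))⁻¹) ^ 3 :=
      pow_lt_pow_left₀ hE2inv.1 (by norm_num) (by norm_num)
    norm_num at h1 h2 ⊢
    linarith
  -- sign of f at endpoints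
  have hch1pos : (0:ℝ) < Real.cosh (π * 1 / 2) := Real.cosh_pos _
  have hch2pos : (0:ℝ) < Real.cosh (π * 1.01 / 2) := Real.cosh_pos _
  have hfa : 0 < f 1 := by
    have hkey : Real.sqrt 3 * Real.cosh (π * 1 / 2) < 8 * Real.sinh (π * 1 / 6) := by
      calc Real.sqrt 3 * Real.cosh (π * 1 / 2) < 1.7320509 * 2.5091791 :=
            mul_lt_mul hs3u hcosh1.le hch1pos (by norm_num)
        _ < 8 * 0.547853 := by norm_num
        _ < 8 * Real.sinh (π * 1 / 6) := by linarith
    have : (1 : ℝ) < (8 / Real.sqrt 3) * Real.sinh (π * 1 / 6) / Real.cosh (π * 1 / 2) := by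
      rw [div_mul_eq_mul_div, div_div, lt_div_iff₀ (by positivity), one_mul]
      linarith
    simp only [hf]
    linarith
  have hfb : f 1.01 < 0 := by
    have hkey : 8 * Real.sinh (π * 1.01 / 6) < 1.01 * (Real.sqrt 3 * Real.cosh (π * 1.01 / 2)) := by
      have hmul : (1.7320508 : ℝ) * 2.545637 < Real.sqrt 3 * Real.cosh (π * 1.01 / 2) :=
        mul_lt_mul'' hs3l hcosh2 (by norm_num) (by norm_num)
      calc 8 * Real.sinh (π * 1.01 / 6) < 8 * 0.553833 := by linarith
        _ < 1.01 * (1.7320508 * 2.545637) := by norm_num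
        _ < 1.01 * (Real.sqrt 3 * Real.cosh (π * 1.01 / 2)) := by linarith
    have : (8 / Real.sqrt 3) * Real.sinh (π * 1.01 / 6) / Real.cosh (π * 1.01 / 2) < 1.01 := by
      rw [div_mul_eq_mul_div, div_div, div_lt_iff₀ (by positivity)]
      linarith
    simp only [hf]
    linarith
  -- IVT
  have hsub := intermediate_value_Ioo' (by norm_num : (1:ℝ) ≤ 1.01) hcont
  have h0 : (0:ℝ) ∈ Set.Ioo (f 1.01) (f 1) := ⟨hfb, hfa⟩
  obtain ⟨s, hs, hfs⟩ := hsub h0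
  exact ⟨s, hs.1, hs.2, by simp only [hf] at hfs; linarith⟩
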